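/- Let M be a K_par(G)-module and d : G → M a map such that e_g·d(gh) = [g]·d(h) + e_{gh}·d(g) for all g, h ∈ G. Then the K-linear map δ : K_par(G) → M defined on the elements e[g] of S(G) (e ∈ E(S(G))) by δ(e[g]) = e·d(g) is well defined and is a partial derivation: δ(st) = s·δ(t) + ε(st)·δ(s) for all s,t ∈ S(G). -/

import Mathlib

/-- A concrete model of Exel's inverse monoid `S(G)`: pairs `(E, g)` where `E` is a
finite subset of `G` containing `1` and `g`, with product `(E,g)(F,h) = (E ∪ gF, gh)`. -/
@[ext]
structure ExelS (G : Type*) [Group G] [DecidableEq G] where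
  carrier : Finset G
  elt : G
  one_mem : (1 : G) ∈ carrier
  elt_mem : elt ∈ carrier

namespace ExelS

variable {G : Type*} [Group G] [DecidableEq G]

instance : Mul (ExelS G) :=
  ⟨fun s t =>
    ⟨s.carrier ∪ t.carrier.image (s.elt * ·), s.elt * t.elt,
      Finset.mem_union_left _ s.one_mem,
      Finset.mem_union_right _ (Finset.mem_image_of_mem _ t.elt_mem)⟩⟩

instance : One (ExelS G) :=
  ⟨⟨{1}, 1, Finset.mem_singleton_self 1, Finset.mem_singleton_self 1⟩⟩

/-- The inverse in the inverse monoid `S(G)`. -/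
instance : Inv (ExelS G) :=
  ⟨fun s =>
    ⟨s.carrier.image (s.elt⁻¹ * ·), s.elt⁻¹,
      Finset.mem_image.2 ⟨s.elt, s.elt_mem, by simp⟩,
      Finset.mem_image.2 ⟨1, s.one_mem, by simp⟩⟩⟩

@[simp] lemma mul_carrier (s t : ExelS G) :
    (s * t).carrier = s.carrier ∪ t.carrier.image (s.elt * ·) := rfl

@[simp] lemma mul_elt (s t : ExelS G) : (s * t).elt = s.elt * t.elt := rfl

@[simp] lemma one_carrier : (1 : ExelS G).carrier = {1} := rfl

@[simp] lemma one_elt : (1 : ExelS G).elt = 1 := rfl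

@[simp] lemma inv_carrier (s : ExelS G) :
    s⁻¹.carrier = s.carrier.image (s.elt⁻¹ * ·) := rfl

@[simp] lemma inv_elt (s : ExelS G) : s⁻¹.elt = s.elt⁻¹ := rfl

instance : Monoid (ExelS G) where
  mul_assoc a b c := by
    ext x
    · simp only [mul_carrier, Finset.image_union, Finset.image_image, Finset.union_assoc,
        Finset.mem_union, Finset.mem_image, Function.comp]
      constructor <;> rintro (h | h | ⟨y, hy, rfl⟩) <;> simp_all [mul_assoc]
    · simp [mul_assoc]
  one_mul s := by
    ext x
    · simp only [mul_carrier, one_carrier, one_elt, one_mul, Finset.image_id']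
      constructor
      · intro h
        rcases Finset.mem_union.1 h with h | h
        · exact (Finset.mem_singleton.1 h) ▸ s.one_mem
        · exact h
      · exact fun h => Finset.mem_union_right _ h
    · simp
  mul_one s := by
    ext x
    · simp only [mul_carrier, one_carrier, Finset.image_singleton, mul_one]
      constructor
      · intro h
        rcases Finset.mem_union.1 h with h | h
        · exact h
        · exact (Finset.mem_singleton.1 h) ▸ s.elt_mem
      · exact fun h => Finset.mem_union_left _ h
    · simp

/-- The canonical generators `[g]` of Exel's monoid. -/
def br (g : G) : ExelS G := ⟨{1, g}, g, by simp, by simp⟩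

/-- The idempotents `e_g = [g][g⁻¹]`. -/
def eIdem (g : G) : ExelS G := br g * (br g⁻¹ : ExelS G)

end ExelS

namespace ExelAux

open ExelS

variable {G : Type*} [Group G] [DecidableEq G]

/-- The "source idempotent" with the same carrier. -/
def eS (s : ExelS G) : ExelS G := ⟨s.carrier, 1, s.one_mem, s.one_mem⟩

@[simp] lemma eS_carrier (s : ExelS G) : (eS s).carrier = s.carrier := rfl
@[simp] lemma eS_elt (s : ExelS G) : (eS s).elt = 1 := rfl

@[simp] lemma br_elt (g : G) : (br g).elt = g := rfl

@[simp] lemma br_one : (br 1 : ExelS G) = 1 := by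
  ext x
  · simp [br]
  · rfl

lemma one_elt_mul (f s : ExelS G) (hf : f.elt = 1) :
    f * s = ⟨f.carrier ∪ s.carrier, s.elt,
      Finset.mem_union_left _ f.one_mem, Finset.mem_union_right _ s.elt_mem⟩ := by
  ext x
  · simp [hf, Finset.image_id']
  · simp [hf]

lemma mem_eIdem_carrier (x g : G) : x ∈ (eIdem g).carrier ↔ x = 1 ∨ x = g := by
  simp only [eIdem, br, mul_carrier, Finset.mem_union, Finset.mem_image,
    Finset.mem_insert, Finset.mem_singleton]
  constructor
  · rintro (h | ⟨y, hy | hy, rfl⟩) <;> simp_all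
  · rintro (rfl | rfl) <;> simp

lemma mul_inv_self (u : ExelS G) : u * u⁻¹ = eS u := by
  ext x
  · simp [Finset.image_image, Function.comp]
  · simp

lemma eIdem_elt (g : G) : (eIdem g).elt = 1 := by simp [eIdem, br]

lemma eIdem_mul_br (g : G) : eIdem g * br g = br g := by
  rw [one_elt_mul _ _ (eIdem_elt g)]
  ext x
  · simp only [Finset.mem_union, mem_eIdem_carrier, br, Finset.mem_insert,
      Finset.mem_singleton]
    tauto
  · simp [br]

lemma absorb_eIdem (f : ExelS G) (g : G) (hf : f.elt = 1) (hg : g ∈ f.carrier) :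
    f * eIdem g = f := by
  rw [one_elt_mul _ _ hf]
  ext x
  · simp only [Finset.mem_union, mem_eIdem_carrier]
    constructor
    · rintro (h | rfl | rfl) <;> first | exact h | exact f.one_mem | exact hg
    · exact Or.inl
  · simp [eIdem_elt, hf]

lemma absorb_eS (f u : ExelS G) (hf : f.elt = 1) (hu : u.carrier ⊆ f.carrier) :
    f * eS u = f := by
  rw [one_elt_mul _ _ hf]
  ext x
  · simp only [Finset.mem_union, eS_carrier]
    exact ⟨fun h => h.elim id (fun h => hu h), Or.inl⟩
  · simp [hf]


end ExelAux

open ExelS ExelAux MonoidAlgebra in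
/-- Let `M` be a `K_par(G)`-module and `d : G → M` satisfy
`e_g·d(gh) = [g]·d(h) + e_{gh}·d(g)`.  Then the `K`-linear map `δ : K_par(G) → M`
determined on the elements `e[g]` of `S(G)` (`e` idempotent) by `δ(e[g]) = e·d(g)`
is well defined and is a partial derivation. -/
theorem exists_partialDerivation_of_cocycle
    {G : Type*} [Group G] [DecidableEq G] {K : Type*} [CommRing K]
    {M : Type*} [AddCommGroup M] [Module (MonoidAlgebra K (ExelS G)) M]
    [Module K M] [IsScalarTower K (MonoidAlgebra K (ExelS G)) M]
    (d : G → M)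
    (hd : ∀ g h : G,
      of K (ExelS G) (eIdem g) • d (g * h) =
        of K (ExelS G) (br g) • d h + of K (ExelS G) (eIdem (g * h)) • d g) :
    ∃ δ : MonoidAlgebra K (ExelS G) →ₗ[K] M,
      (∀ (e : ExelS G) (g : G), e * e = e →
        δ (of K (ExelS G) (e * br g)) = of K (ExelS G) e • d g) ∧
      ∀ s t : ExelS G,
        δ (of K (ExelS G) (s * t)) =
          of K (ExelS G) s • δ (of K (ExelS G) t) +
            of K (ExelS G) ((s * t) * (s * t)⁻¹) • δ (of K (ExelS G) s) := by
  classical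
  set D : ExelS G → M := fun u => of K (ExelS G) (eS u) • d u.elt with hD
  refine ⟨(Finsupp.lift M K (ExelS G)) D ∘ₗ (MonoidAlgebra.coeffLinearEquiv K).toLinearMap, ?_, ?_⟩
  all_goals
    have hδ : ∀ u : ExelS G,
        ((Finsupp.lift M K (ExelS G)) D ∘ₗ (MonoidAlgebra.coeffLinearEquiv K).toLinearMap) (of K (ExelS G) u) = D u := by
      intro u
      simp [MonoidAlgebra.coeff_single, Finsupp.sum_single_index]
    have hsmul : ∀ (a b : ExelS G) (m : M),
        of K (ExelS G) a • (of K (ExelS G) b • m) = of K (ExelS G) (a * b) • m := by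
      intro a b m
      rw [smul_smul, ← map_mul]
    have eIdem_one : (eIdem (1 : G)) = 1 := by
      simp [eIdem]
    have d1 : d (1 : G) = 0 := by
      have h := hd 1 1
      simp only [mul_one, eIdem_one, br_one, map_one, one_smul] at h
      exact right_eq_add.1 h
    have key : ∀ g : G, of K (ExelS G) (eIdem g) • d g = d g := by
      intro g
      have h := hd g g⁻¹
      rw [mul_inv_cancel, d1, smul_zero, eIdem_one, map_one, one_smul] at h
      have hdg : d g = -(of K (ExelS G) (br g) • d g⁻¹) := by
        rw [eq_neg_iff_add_eq_zero, add_comm, ← h]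
      rw [hdg, smul_neg, hsmul, eIdem_mul_br]
  · -- well-definedness on e[g]
    intro e g he
    have helt : e.elt = 1 := by
      have h := congrArg ExelS.elt he
      simp only [mul_elt] at h
      exact mul_left_cancel (a := e.elt) (by rw [h, mul_one])
    have hcar : eS (e * br g) = e * eIdem g := by
      rw [one_elt_mul _ _ helt]
      ext x
      · simp only [eS_carrier, mul_carrier, Finset.mem_union, Finset.mem_image,
          mem_eIdem_carrier, br, Finset.mem_insert, Finset.mem_singleton, helt, one_mul]
        aesop
      · simp [eIdem_elt, helt]
    erw [hδ]
    simp only [hD, mul_elt, helt, one_mul, br_elt]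
    rw [hcar, ← hsmul, key]
  · -- the derivation identity
    intro s t
    erw [hδ, hδ, hδ]
    simp only [hD, ExelAux.mul_inv_self]
    have h1 : eS (s * t) * eIdem s.elt = eS (s * t) := by
      refine absorb_eIdem _ _ rfl ?_
      exact Finset.mem_union_left _ s.elt_mem
    have h2 : eS (s * t) * eIdem (s.elt * t.elt) = eS (s * t) := by
      refine absorb_eIdem _ _ rfl ?_
      exact (s * t).elt_mem
    have h3 : eS (s * t) * br s.elt = s * eS t := by
      rw [one_elt_mul _ _ rfl]
      ext x
      · simp only [eS_carrier, mul_carrier, Finset.mem_union, br, Finset.mem_insert,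
          Finset.mem_singleton, Finset.mem_image]
        have hm1 := s.one_mem
        have hm2 := s.elt_mem
        aesop
      · simp [br]
    have h4 : eS (s * t) * eS s = eS (s * t) := by
      refine absorb_eS _ _ rfl ?_
      exact fun x hx => Finset.mem_union_left _ hx
    have hcoc := congrArg (fun m => of K (ExelS G) (eS (s * t)) • m) (hd s.elt t.elt)
    simp only [smul_add, hsmul, h1, h2, h3] at hcoc
    rw [hsmul, hsmul, h4, mul_elt]
    exact hcoc
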